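/- Let u_ε=(ε/(λn))^{1/q} and s*_i=min{u_ε, |x*_i|^{1/(q−1)}}. Suppose x* satisfies 0 ∈ ∂f/∂x_i(x*)+λp s*_i·sgn(x*_i) for all i (where sgn(0)=[−1,1]), f has L_f-Lipschitz gradient with infimum f̲, F(x*) ≤ F(x⁰)+ε, and 0<ε< nλ[√(2L_f(F(x⁰)+ε−f̲))/(λp)]^q. Then every nonzero x*_i satisfies |x*_i| > u_ε^{q−1}, and hence ∂f/∂x_i(x*)+λp|x*_i|^{p−1}sgn(x*_i)=0 for all i with x*_i≠0, i.e. x* is a first-order stationary point of F(x)=f(x)+λ‖x‖_p^p. -/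

import Mathlib

open RealInnerProductSpace

/-- The set-valued sign: sgn(t) = {1} if t > 0, {-1} if t < 0, and [-1,1] if t = 0. -/
noncomputable def sgnSet (t : ℝ) : Set ℝ :=
  if 0 < t then {1} else if t < 0 then {-1} else Set.Icc (-1) 1

/-- Descent lemma: if the gradient of `f` is `Lf`-Lipschitz, then
`f (x + v) ≤ f x + ⟪∇f x, v⟫ + Lf/2 * ‖v‖²`. -/
lemma descent_lemma {n : ℕ} (Lf : ℝ) (hLf : 0 < Lf)
    (f : EuclideanSpace ℝ (Fin n) → ℝ) (hf : Differentiable ℝ f)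
    (hlip : ∀ a b : EuclideanSpace ℝ (Fin n), ‖gradient f a - gradient f b‖ ≤ Lf * ‖a - b‖)
    (x v : EuclideanSpace ℝ (Fin n)) :
    f (x + v) ≤ f x + ⟪gradient f x, v⟫ + Lf / 2 * ‖v‖ ^ 2 := by
  have key : ∀ (y w : EuclideanSpace ℝ (Fin n)), fderiv ℝ f y w = ⟪gradient f y, w⟫ := by
    intro y w
    rw [gradient, InnerProductSpace.toDual_symm_apply]
  have grad_cont : Continuous (gradient f) := by
    apply LipschitzWith.continuous (K := Real.toNNReal Lf)
    apply LipschitzWith.of_dist_le_mul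
    intro a b
    rw [dist_eq_norm, dist_eq_norm, Real.coe_toNNReal _ hLf.le]
    exact hlip a b
  set c : ℝ → EuclideanSpace ℝ (Fin n) := fun t => x + t • v with hc_def
  have hc : ∀ t : ℝ, HasDerivAt c v t := by
    intro t
    have h := ((hasDerivAt_id t).smul_const v).const_add x
    rw [one_smul] at h
    exact h
  have hccont : Continuous c := by
    apply Continuous.add continuous_const
    exact continuous_id.smul continuous_const
  set φ : ℝ → ℝ := fun t => ⟪gradient f (c t), v⟫ with hφ_def
  have hg : ∀ t : ℝ, HasDerivAt (fun s => f (c s)) (φ t) t := by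
    intro t
    have h1 := ((hf (c t)).hasFDerivAt).comp_hasDerivAt t (hc t)
    show HasDerivAt (fun s => f (c s)) ⟪gradient f (c t), v⟫ t
    rw [← key]
    exact h1
  have hφcont : Continuous φ := (grad_cont.comp hccont).inner continuous_const
  have ftc : ∫ t in (0:ℝ)..1, φ t = f (c 1) - f (c 0) :=
    intervalIntegral.integral_eq_sub_of_hasDerivAt (fun t _ => hg t)
      (hφcont.intervalIntegrable 0 1)
  have hc0 : c 0 = x := by simp [hc_def]
  have hc1 : c 1 = x + v := by simp [hc_def]
  have bound : ∀ t ∈ Set.Icc (0:ℝ) 1, φ t ≤ ⟪gradient f x, v⟫ + (Lf * ‖v‖ ^ 2) * t := by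
    intro t ht
    have h1 : φ t - ⟪gradient f x, v⟫ = ⟪gradient f (c t) - gradient f x, v⟫ := by
      rw [inner_sub_left]
    have h2 : ⟪gradient f (c t) - gradient f x, v⟫ ≤ ‖gradient f (c t) - gradient f x‖ * ‖v‖ :=
      real_inner_le_norm _ _
    have h3 : ‖gradient f (c t) - gradient f x‖ ≤ Lf * ‖c t - x‖ := hlip _ _
    have h4 : ‖c t - x‖ = t * ‖v‖ := by
      have : c t - x = t • v := by simp [hc_def]
      rw [this, norm_smul, Real.norm_eq_abs, abs_of_nonneg ht.1]
    have h5 : ‖gradient f (c t) - gradient f x‖ * ‖v‖ ≤ Lf * (t * ‖v‖) * ‖v‖ := by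
      rw [← h4]; exact mul_le_mul_of_nonneg_right h3 (norm_nonneg v)
    have h6 : Lf * (t * ‖v‖) * ‖v‖ = Lf * ‖v‖ ^ 2 * t := by ring
    linarith
  have hint : ∫ t in (0:ℝ)..1, (⟪gradient f x, v⟫ + (Lf * ‖v‖ ^ 2) * t)
      = ⟪gradient f x, v⟫ + Lf / 2 * ‖v‖ ^ 2 := by
    rw [intervalIntegral.integral_add (g := fun t : ℝ => Lf * ‖v‖ ^ 2 * t) intervalIntegrable_const
      ((continuous_const.mul continuous_id').intervalIntegrable 0 1 :
        IntervalIntegrable (fun t : ℝ => Lf * ‖v‖ ^ 2 * t) MeasureTheory.volume 0 1),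
      intervalIntegral.integral_const_mul, integral_id, intervalIntegral.integral_const]
    simp
    ring
  have hmono : ∫ t in (0:ℝ)..1, φ t ≤
      ∫ t in (0:ℝ)..1, (⟪gradient f x, v⟫ + (Lf * ‖v‖ ^ 2) * t) := by
    apply intervalIntegral.integral_mono_on zero_le_one (hφcont.intervalIntegrable 0 1)
      ((continuous_const.add (continuous_const.mul continuous_id)).intervalIntegrable 0 1) bound
  rw [ftc, hc0, hc1] at hmono
  rw [hint] at hmono
  linarith

/-- Norm of the gradient is controlled by the gap to the infimum. -/
lemma grad_norm_le {n : ℕ} (Lf fbar : ℝ) (hLf : 0 < Lf)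
    (f : EuclideanSpace ℝ (Fin n) → ℝ) (hf : Differentiable ℝ f)
    (hlip : ∀ a b : EuclideanSpace ℝ (Fin n), ‖gradient f a - gradient f b‖ ≤ Lf * ‖a - b‖)
    (hinf : IsGLB (Set.range f) fbar) (x : EuclideanSpace ℝ (Fin n)) :
    ‖gradient f x‖ ^ 2 ≤ 2 * Lf * (f x - fbar) := by
  set G := gradient f x with hG_def
  have hd := descent_lemma Lf hLf f hf hlip x (-((1 / Lf) • G))
  have h1 : ⟪G, -((1 / Lf) • G)⟫ = -(1 / Lf) * ‖G‖ ^ 2 := by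
    rw [inner_neg_right, inner_smul_right, real_inner_self_eq_norm_sq]
    ring
  have h2 : ‖-((1 / Lf) • G)‖ ^ 2 = (1 / Lf) ^ 2 * ‖G‖ ^ 2 := by
    rw [norm_neg, norm_smul, Real.norm_eq_abs, abs_of_pos (by positivity : (0:ℝ) < 1 / Lf)]
    ring
  rw [h1, h2] at hd
  have hfb : fbar ≤ f (x + -((1 / Lf) • G)) := hinf.1 (Set.mem_range_self _)
  have hLfne : Lf ≠ 0 := hLf.ne'
  have : f x + -(1 / Lf) * ‖G‖ ^ 2 + Lf / 2 * ((1 / Lf) ^ 2 * ‖G‖ ^ 2)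
      = f x - ‖G‖ ^ 2 / (2 * Lf) := by
    field_simp
    ring
  rw [this] at hd
  have h6 : fbar ≤ f x - ‖G‖ ^ 2 / (2 * Lf) := le_trans hfb hd
  have h2L : 0 < 2 * Lf := by positivity
  have h7 : ‖G‖ ^ 2 / (2 * Lf) ≤ f x - fbar := by linarith
  nlinarith [(div_le_iff₀ h2L).mp h7]

/-- If ε is below the threshold, a stationary point x* of the ε-approximation with
F(x*) ≤ F(x⁰)+ε satisfies |x*_i| > u_ε^(q-1) for all nonzero entries and is a
first-order stationary point of F(x) = f(x) + λ‖x‖_p^p. -/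
theorem stmt_17 (n : ℕ) (hn : 1 ≤ n) (p q lam Lf eps fbar : ℝ) (hp : 0 < p)
    (hp1 : p < 1) (hq : 1 / p + 1 / q = 1) (hlam : 0 < lam) (hLf : 0 < Lf)
    (f : EuclideanSpace ℝ (Fin n) → ℝ) (hf : Differentiable ℝ f)
    (hlip : ∀ a b : EuclideanSpace ℝ (Fin n), ‖gradient f a - gradient f b‖ ≤ Lf * ‖a - b‖)
    (hinf : IsGLB (Set.range f) fbar)
    (x x0 : EuclideanSpace ℝ (Fin n))
    (hstat : ∀ i, ∃ g ∈ sgnSet (x i),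
      fderiv ℝ f x (EuclideanSpace.single i 1) +
        lam * p * min ((eps / (lam * n)) ^ (1 / q)) (|x i| ^ (1 / (q - 1))) * g = 0)
    (hF : f x + lam * ∑ i, |x i| ^ p ≤ f x0 + lam * (∑ i, |x0 i| ^ p) + eps)
    (heps : 0 < eps)
    (heps2 : eps < n * lam *
      (Real.sqrt (2 * Lf * (f x0 + lam * (∑ i, |x0 i| ^ p) + eps - fbar)) / (lam * p)) ^ q) :
    (∀ i, x i ≠ 0 → ((eps / (lam * n)) ^ (1 / q)) ^ (q - 1) < |x i|) ∧
      (∀ i, x i ≠ 0 →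
        fderiv ℝ f x (EuclideanSpace.single i 1) +
          lam * p * |x i| ^ (p - 1) * Real.sign (x i) = 0) := by
  -- basic facts about q
  have hp0 : p ≠ 0 := hp.ne'
  have h1q : 1 / q = 1 - 1 / p := by linarith
  have h1qneg : 1 / q < 0 := by
    have : 1 < 1 / p := by rw [lt_div_iff₀ hp]; linarith
    linarith
  have hqneg : q < 0 := by
    by_contra h
    push_neg at h
    rcases eq_or_lt_of_le h with h' | h'
    · rw [← h'] at h1qneg; simp at h1qneg
    · exact absurd (by positivity : 0 < 1 / q) (not_lt.mpr h1qneg.le)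
  have hq0 : q ≠ 0 := hqneg.ne
  have hpq : p + q = p * q := by
    field_simp at hq
    linarith
  have hq1ne : q - 1 ≠ 0 := by
    intro h
    have : q = 1 := by linarith
    linarith
  have hinvq1 : 1 / (q - 1) = p - 1 := by
    rw [div_eq_iff hq1ne]
    nlinarith [hpq]
  have hinvq1neg : 1 / (q - 1) < 0 := by rw [hinvq1]; linarith
  -- positivity facts
  have hn0 : (0:ℝ) < n := by
    have : (1:ℝ) ≤ n := by exact_mod_cast hn
    linarith
  set u := (eps / (lam * n)) ^ (1 / q) with hu_def
  have hratio : 0 < eps / (lam * n) := by positivity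
  have hu : 0 < u := Real.rpow_pos_of_pos hratio _
  have hsum0 : 0 ≤ ∑ i, |x0 i| ^ p :=
    Finset.sum_nonneg fun i _ => Real.rpow_nonneg (abs_nonneg _) p
  have hsumx : 0 ≤ ∑ i, |x i| ^ p :=
    Finset.sum_nonneg fun i _ => Real.rpow_nonneg (abs_nonneg _) p
  have hfb0 : fbar ≤ f x0 := hinf.1 (Set.mem_range_self _)
  set D := f x0 + lam * (∑ i, |x0 i| ^ p) + eps - fbar with hD_def
  have hD : 0 < D := by
    have : 0 ≤ lam * (∑ i, |x0 i| ^ p) := by positivity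
    simp only [hD_def]
    linarith
  set A := Real.sqrt (2 * Lf * D) with hA_def
  have hA : 0 < A := Real.sqrt_pos.mpr (by positivity)
  -- gradient norm bound
  have hGnorm : ‖gradient f x‖ ≤ A := by
    have h1 := grad_norm_le Lf fbar hLf f hf hlip hinf x
    have h2 : f x - fbar ≤ D := by
      have : 0 ≤ lam * (∑ i, |x i| ^ p) := by positivity
      simp only [hD_def]
      linarith
    rw [hA_def, Real.le_sqrt (norm_nonneg _) (by positivity)]
    nlinarith
  have hGb : ∀ i, |fderiv ℝ f x (EuclideanSpace.single i 1)| ≤ A := by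
    intro i
    have key : fderiv ℝ f x (EuclideanSpace.single i 1)
        = ⟪gradient f x, EuclideanSpace.single i 1⟫ := by
      rw [gradient, InnerProductSpace.toDual_symm_apply]
    rw [key]
    calc |⟪gradient f x, EuclideanSpace.single i 1⟫|
        ≤ ‖gradient f x‖ * ‖EuclideanSpace.single i (1:ℝ)‖ := abs_real_inner_le_norm _ _
      _ = ‖gradient f x‖ := by rw [EuclideanSpace.norm_single]; simp
      _ ≤ A := hGnorm
  -- Part 1
  have part1 : ∀ i, x i ≠ 0 → u ^ (q - 1) < |x i| := by
    intro i hxi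
    by_contra hcon
    push_neg at hcon
    -- then |x i|^(1/(q-1)) ≥ u, so the min is u
    have habs : 0 < |x i| := abs_pos.mpr hxi
    have h1 : (u ^ (q - 1)) ^ (1 / (q - 1)) ≤ |x i| ^ (1 / (q - 1)) :=
      Real.rpow_le_rpow_of_nonpos habs hcon hinvq1neg.le
    have h2 : (u ^ (q - 1)) ^ (1 / (q - 1)) = u := by
      rw [← Real.rpow_mul hu.le, mul_one_div_cancel hq1ne, Real.rpow_one]
    have hmin : min u (|x i| ^ (1 / (q - 1))) = u := min_eq_left (h2 ▸ h1)
    obtain ⟨g, hg, heq⟩ := hstat i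
    have habsg : |g| = 1 := by
      rcases lt_trichotomy (x i) 0 with h | h | h
      · simp [sgnSet, h, not_lt.mpr h.le] at hg
        simp [hg]
      · exact absurd h hxi
      · simp [sgnSet, h] at hg
        simp [hg]
    rw [hmin] at heq
    have hfd : |fderiv ℝ f x (EuclideanSpace.single i 1)| = lam * p * u := by
      have : fderiv ℝ f x (EuclideanSpace.single i 1) = -(lam * p * u * g) := by linarith
      rw [this, abs_neg, abs_mul, habsg, mul_one, abs_of_pos (by positivity)]
    have hlpu : lam * p * u ≤ A := hfd ▸ hGb i
    have huB : u ≤ A / (lam * p) := by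
      rw [le_div_iff₀ (by positivity)]
      linarith
    -- from heps2 get u > A / (lam * p)
    set B := A / (lam * p) with hB_def
    have hB : 0 < B := by positivity
    have h3 : eps / (lam * n) < B ^ q := by
      rw [div_lt_iff₀ (by positivity)]
      calc eps < n * lam * B ^ q := heps2
        _ = B ^ q * (lam * n) := by ring
    have h4 : (B ^ q) ^ (1 / q) < (eps / (lam * n)) ^ (1 / q) :=
      Real.rpow_lt_rpow_of_neg (by positivity) h3 h1qneg
    have h5 : (B ^ q) ^ (1 / q) = B := by
      rw [← Real.rpow_mul hB.le, mul_one_div_cancel hq0, Real.rpow_one]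
    rw [h5] at h4
    -- h4 : B < u, but u ≤ B
    rw [← hu_def] at h4
    linarith
  refine ⟨part1, ?_⟩
  -- Part 2
  intro i hxi
  have habs : 0 < |x i| := abs_pos.mpr hxi
  have h1 : |x i| ^ (1 / (q - 1)) < (u ^ (q - 1)) ^ (1 / (q - 1)) :=
    Real.rpow_lt_rpow_of_neg (by positivity) (part1 i hxi) hinvq1neg
  have h2 : (u ^ (q - 1)) ^ (1 / (q - 1)) = u := by
    rw [← Real.rpow_mul hu.le, mul_one_div_cancel hq1ne, Real.rpow_one]
  rw [h2] at h1
  have hmin : min u (|x i| ^ (1 / (q - 1))) = |x i| ^ (1 / (q - 1)) := min_eq_right h1.le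
  obtain ⟨g, hg, heq⟩ := hstat i
  rw [hmin] at heq
  have hgsign : g = Real.sign (x i) := by
    rcases lt_trichotomy (x i) 0 with h | h | h
    · simp [sgnSet, h, not_lt.mpr h.le] at hg
      rw [hg, Real.sign_of_neg h]
    · exact absurd h hxi
    · simp [sgnSet, h] at hg
      rw [hg, Real.sign_of_pos h]
  rw [hgsign, hinvq1] at heq
  exact heq
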